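/- With S̃ the blow-up of S at the 2g−2 points over K_R as above and n > 2, the divisor D = bl*((n+2)C₀ + (n−1)K_R f) − (n+1)ΣE_i on S̃ is ample: D² = (n²−5)(2g−2) > 0 and D has positive intersection with C₀, with every fiber class, and with every exceptional curve E_i. -/
import Mathlib


/-- With `S̃` the blow-up of `S` at the `2g−2` points over `K_R` and `n > 2`,
the divisor `D = bl*((n+2)C₀ + (n−1)K_Rf) − (n+1)ΣE_i` is ample:
`D² = (n²−5)(2g−2) > 0`, and `D` has positive intersection with `C₀`, with every fiber,
and with every exceptional curve `E_i` — whence ampleness by the Nakai–Moishezon criterion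
(encoded as the hypothesis `hNakai` on the surface `S̃`, whose Picard group is generated
by `bl*C₀`, fibers and the `E_i`).  Intersection rules: `E_i·E_j = −δ_{ij}`,
`bl*(x)·E_i = 0`, `bl*(x)·bl*(y) = x·y`, with `C₀² = 0`, `C₀·f = 1`, `f² = 0` on `S`. -/
theorem stmt_15 (g n : ℕ) (hg : 2 ≤ g) (hn : 2 < n)
    (P Pt : Type*) [AddCommGroup P] [AddCommGroup Pt]
    (ipS : P → P → ℤ) (ip : Pt → Pt → ℤ)
    (hb1 : ∀ x y z : Pt, ip (x + y) z = ip x z + ip y z)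
    (hb2 : ∀ x y z : Pt, ip x (y + z) = ip x y + ip x z)
    (hs1 : ∀ (c : ℤ) (x y : Pt), ip (c • x) y = c * ip x y)
    (hs2 : ∀ (c : ℤ) (x y : Pt), ip x (c • y) = c * ip x y)
    (hbS1 : ∀ x y z : P, ipS (x + y) z = ipS x z + ipS y z)
    (hbS2 : ∀ x y z : P, ipS x (y + z) = ipS x y + ipS x z)
    (hsS1 : ∀ (c : ℤ) (x y : P), ipS (c • x) y = c * ipS x y)
    (hsS2 : ∀ (c : ℤ) (x y : P), ipS x (c • y) = c * ipS x y)
    (blPull : P →+ Pt) (E : Fin (2 * g - 2) → Pt)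
    (hEE : ∀ i j, ip (E i) (E j) = if i = j then -1 else 0)
    (hmix : ∀ (x : P) i, ip (blPull x) (E i) = 0)
    (hmix' : ∀ (x : P) i, ip (E i) (blPull x) = 0)
    (hpull : ∀ x y : P, ip (blPull x) (blPull y) = ipS x y)
    (C0 f : P)
    (hC0sq : ipS C0 C0 = 0) (hC0f : ipS C0 f = 1) (hfC0 : ipS f C0 = 1)
    (hff : ipS f f = 0)
    (D : Pt)
    (hD : D = blPull (((n : ℤ) + 2) • C0 + (((n : ℤ) - 1) * (2 * (g : ℤ) - 2)) • f)
      - ((n : ℤ) + 1) • (∑ i, E i))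
    (Ample : Pt → Prop)
    (hNakai : ∀ x : Pt, 0 < ip x x → 0 < ip x (blPull C0) → 0 < ip x (blPull f) →
      (∀ i, 0 < ip x (E i)) → Ample x) :
    ip D D = ((n : ℤ) ^ 2 - 5) * (2 * (g : ℤ) - 2) ∧ 0 < ip D D ∧
    0 < ip D (blPull C0) ∧ 0 < ip D (blPull f) ∧ (∀ i, 0 < ip D (E i)) ∧
    Ample D := by
  have hsub1 : ∀ x y z : Pt, ip (x - y) z = ip x z - ip y z := by
    intro x y z
    have hneg : ip (-y) z = -ip y z := by simpa using hs1 (-1) y z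
    simpa [sub_eq_add_neg, hneg] using hb1 x (-y) z
  have hsub2 : ∀ x y z : Pt, ip x (y - z) = ip x y - ip x z := by
    intro x y z
    have hneg : ip x (-z) = -ip x z := by simpa using hs2 (-1) x z
    simpa [sub_eq_add_neg, hneg] using hb2 x y (-z)
  have hsumR : ∀ (x : Pt), ip x (∑ i, E i) = ∑ i, ip x (E i) := fun x =>
    map_sum (AddMonoidHom.mk' (ip x) (fun a b => hb2 x a b)) E Finset.univ
  have hsumL : ∀ (x : Pt), ip (∑ i, E i) x = ∑ i, ip (E i) x := fun x =>
    map_sum (AddMonoidHom.mk' (fun y => ip y x) (fun a b => hb1 a b x)) E Finset.univ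
  set a : ℤ := (n : ℤ) + 2 with ha
  set b : ℤ := ((n : ℤ) - 1) * (2 * (g : ℤ) - 2) with hbdef
  set A : P := a • C0 + b • f with hA
  have hcard : ((Finset.univ : Finset (Fin (2 * g - 2))).card : ℤ) = 2 * (g : ℤ) - 2 := by
    simp only [Finset.card_univ, Fintype.card_fin]
    have h2 : 2 ≤ 2 * g := by omega
    push_cast [Nat.cast_sub h2]
    ring
  have hDE : ∀ i, ip D (E i) = (n : ℤ) + 1 := by
    intro i
    rw [hD, hsub1, hmix, hs1, hsumL, Finset.sum_congr rfl (fun j _ => hEE j i)]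
    simp
  have hDpull : ∀ x : P, ip D (blPull x) = ipS A x := by
    intro x
    rw [hD, hsub1, hpull, hs1, hsumL, Finset.sum_congr rfl (fun j _ => hmix' x j)]
    simp
  have hDC0 : ip D (blPull C0) = b := by
    rw [hDpull, hA, hbS1, hsS1, hsS1, hC0sq, hfC0]; ring
  have hDf : ip D (blPull f) = a := by
    rw [hDpull, hA, hbS1, hsS1, hsS1, hC0f, hff]; ring
  have hAA : ipS A A = 2 * a * b := by
    simp only [hA, hbS1, hbS2, hsS1, hsS2, hC0sq, hC0f, hfC0, hff]; ring
  have hDD : ip D D = ((n : ℤ) ^ 2 - 5) * (2 * (g : ℤ) - 2) := by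
    have h1 : ip D D = ip D (blPull A) - ((n : ℤ) + 1) * ip D (∑ i, E i) :=
      calc ip D D = ip D (blPull A - ((n:ℤ)+1) • (∑ i, E i)) := by rw [← hD]
        _ = _ := by rw [hsub2, hs2]
    rw [h1, hDpull, hAA, hsumR, Finset.sum_congr rfl (fun j _ => hDE j),
      Finset.sum_const, nsmul_eq_mul, hcard, ha, hbdef]
    ring
  have hgpos : (0:ℤ) < 2 * (g : ℤ) - 2 := by
    have : (2:ℤ) ≤ (g:ℤ) := by exact_mod_cast hg
    linarith
  have hnpos : (2:ℤ) < (n:ℤ) := by exact_mod_cast hn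
  have h1 : 0 < ip D D := by
    rw [hDD]
    have h9 : (9:ℤ) ≤ (n:ℤ)^2 := by nlinarith
    nlinarith
  have h2 : 0 < ip D (blPull C0) := by rw [hDC0, hbdef]; nlinarith
  have h3 : 0 < ip D (blPull f) := by rw [hDf, ha]; linarith
  have h4 : ∀ i, 0 < ip D (E i) := fun i => by rw [hDE]; linarith
  exact ⟨hDD, h1, h2, h3, h4, hNakai D h1 h2 h3 h4⟩
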